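/- Let E be a complex inner product space, S ⊆ E a complete linear subspace, and B ∈ E with orthogonal decomposition B = B∥ + B⊥ (B∥ ∈ S the orthogonal projection of B onto S, B⊥ = B − B∥). Let c ∈ ℝ satisfy 0 ≤ c < 1, assume B∥ ≠ 0 and c·‖B‖ ≤ ‖B∥‖, and set μ = 1 − (c/√(1 − c²))·(‖B⊥‖/‖B∥‖). Then the infimum over A ∈ S of min{‖A‖, ‖B‖}·c + ‖A − B‖ equals min{ ‖(μ − 1)·B∥ − B⊥‖ + c·μ·‖B∥‖, ‖B‖ }. -/

import Mathlib

set_option maxHeartbeats 1000000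


/-- Proposition A.1 (nondegenerate branch): with `Bpar` the orthogonal projection of `B`
onto the complete subspace `S`, `Bperp = B - Bpar`, `0 ≤ c < 1`, `Bpar ≠ 0` and
`c·‖B‖ ≤ ‖Bpar‖`, the infimum over `A ∈ S` of `min{‖A‖,‖B‖}·c + ‖A - B‖` equals
`min{‖(μ-1)·Bpar - Bperp‖ + c·μ·‖Bpar‖, ‖B‖}` with `μ = 1 - (c/√(1-c²))·(‖Bperp‖/‖Bpar‖)`. -/
theorem flat_norm_distance_to_subspace_nondegenerate
    {E : Type*} [NormedAddCommGroup E] [InnerProductSpace ℂ E]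
    (S : Submodule ℂ E) [CompleteSpace S] (B : E) (c : ℝ)
    (hc0 : 0 ≤ c) (hc1 : c < 1)
    (Bpar Bperp : E)
    (hpar : Bpar = (S.orthogonalProjectionOnto B : E))
    (hperp : Bperp = B - Bpar)
    (hBpar : Bpar ≠ 0)
    (hcB : c * ‖B‖ ≤ ‖Bpar‖)
    (μ : ℝ)
    (hμ : μ = 1 - (c / Real.sqrt (1 - c ^ 2)) * (‖Bperp‖ / ‖Bpar‖)) :
    (⨅ A : S, (min ‖(A : E)‖ ‖B‖ * c + ‖(A : E) - B‖))
      = min (‖(μ - 1) • Bpar - Bperp‖ + c * μ * ‖Bpar‖) ‖B‖ := by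
  have hc2 : 0 < 1 - c ^ 2 := by nlinarith
  set s : ℝ := Real.sqrt (1 - c ^ 2) with hsdef
  have hs0 : 0 < s := Real.sqrt_pos.2 hc2
  have hs2 : s ^ 2 = 1 - c ^ 2 := Real.sq_sqrt hc2.le
  have hs1 : s ≤ 1 := by nlinarith
  have hp : 0 < ‖Bpar‖ := norm_pos_iff.2 hBpar
  have hq : 0 ≤ ‖Bperp‖ := norm_nonneg _
  have hBparS : Bpar ∈ S := hpar ▸ (S.orthogonalProjectionOnto B).2
  have horth : ∀ v ∈ S, inner ℂ v Bperp = (0 : ℂ) := by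
    intro v hv
    rw [hperp, hpar, inner_eq_zero_symm]
    exact S.starProjection_inner_eq_zero B v hv
  have pyth_sub : ∀ v ∈ S, ‖v - Bperp‖ ^ 2 = ‖v‖ ^ 2 + ‖Bperp‖ ^ 2 := by
    intro v hv
    have h0 : inner ℂ v (-Bperp) = (0 : ℂ) := by rw [inner_neg_right, horth v hv, neg_zero]
    have h1 := norm_add_sq_eq_norm_sq_add_norm_sq_of_inner_eq_zero (𝕜 := ℂ) v (-Bperp) h0
    rw [← sub_eq_add_neg, norm_neg] at h1
    simpa [pow_two] using h1
  have pyth_add : ∀ v ∈ S, ‖v + Bperp‖ ^ 2 = ‖v‖ ^ 2 + ‖Bperp‖ ^ 2 := by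
    intro v hv
    have h1 := norm_add_sq_eq_norm_sq_add_norm_sq_of_inner_eq_zero (𝕜 := ℂ) v Bperp (horth v hv)
    simpa [pow_two] using h1
  have hBsum : B = Bpar + Bperp := by rw [hperp]; abel
  have hB2 : ‖B‖ ^ 2 = ‖Bpar‖ ^ 2 + ‖Bperp‖ ^ 2 := by
    conv_lhs => rw [hBsum]
    exact pyth_add Bpar hBparS
  have hpB : ‖Bpar‖ ≤ ‖B‖ := by
    have h : ‖Bpar‖ ^ 2 ≤ ‖B‖ ^ 2 := by nlinarith [sq_nonneg ‖Bperp‖]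
    exact (abs_le_of_sq_le_sq' h (norm_nonneg B)).2
  -- key scalar inequality (2D Cauchy–Schwarz)
  have key : ∀ u : ℝ, s * ‖Bperp‖ - c * u ≤ Real.sqrt (u ^ 2 + ‖Bperp‖ ^ 2) := by
    intro u
    have h1 : (s * ‖Bperp‖ - c * u) ^ 2 ≤ u ^ 2 + ‖Bperp‖ ^ 2 := by
      nlinarith [sq_nonneg (s * u + c * ‖Bperp‖)]
    calc s * ‖Bperp‖ - c * u ≤ |s * ‖Bperp‖ - c * u| := le_abs_self _
      _ = Real.sqrt ((s * ‖Bperp‖ - c * u) ^ 2) := (Real.sqrt_sq_eq_abs _).symm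
      _ ≤ Real.sqrt (u ^ 2 + ‖Bperp‖ ^ 2) := Real.sqrt_le_sqrt h1
  have hAB : ∀ A : S, ‖(A : E) - B‖ = Real.sqrt (‖(A : E) - Bpar‖ ^ 2 + ‖Bperp‖ ^ 2) := by
    intro A
    have hmem : (A : E) - Bpar ∈ S := S.sub_mem A.2 hBparS
    have h3 : (A : E) - B = ((A : E) - Bpar) - Bperp := by rw [hperp]; abel
    rw [h3, ← pyth_sub _ hmem, Real.sqrt_sq (norm_nonneg _)]
  -- facts about μ
  have hcq : c * ‖Bperp‖ ≤ s * ‖Bpar‖ := by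
    have h2 : c ^ 2 * ‖B‖ ^ 2 ≤ ‖Bpar‖ ^ 2 := by
      nlinarith [mul_nonneg hc0 (norm_nonneg B)]
    have h3 : (c * ‖Bperp‖) ^ 2 ≤ (s * ‖Bpar‖) ^ 2 := by nlinarith
    nlinarith [mul_nonneg hc0 hq, mul_nonneg hs0.le hp.le]
  have hμ0 : 0 ≤ μ := by
    rw [hμ, sub_nonneg, div_mul_div_comm, div_le_one (by positivity)]
    exact hcq
  have hμ1 : μ ≤ 1 := by
    rw [hμ]
    have : 0 ≤ (c / s) * (‖Bperp‖ / ‖Bpar‖) := by positivity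
    linarith
  have h1μ : (1 - μ) * ‖Bpar‖ * s = c * ‖Bperp‖ := by
    rw [hμ]
    field_simp
    ring
  have hsmul : ∀ r : ℝ, r • Bpar ∈ S := by
    intro r
    have := S.smul_mem (r : ℂ) hBparS
    rwa [Complex.coe_smul] at this
  have hnorm1 : ‖(μ - 1) • Bpar - Bperp‖ = ‖Bperp‖ / s := by
    have habs : ‖(μ - 1 : ℝ)‖ = 1 - μ := by
      rw [Real.norm_eq_abs, abs_of_nonpos (by linarith)]; ring
    have hsq : ‖(μ - 1) • Bpar - Bperp‖ ^ 2 = (‖Bperp‖ / s) ^ 2 := by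
      rw [pyth_sub _ (hsmul (μ - 1)), norm_smul, habs]
      have hss : ((1 - μ) * ‖Bpar‖) ^ 2 * s ^ 2 = (c * ‖Bperp‖) ^ 2 := by
        linear_combination ((1 - μ) * ‖Bpar‖ * s + c * ‖Bperp‖) * h1μ
      rw [div_pow, eq_div_iff (pow_ne_zero 2 hs0.ne')]
      linear_combination hss + ‖Bperp‖ ^ 2 * hs2
    calc ‖(μ - 1) • Bpar - Bperp‖ = Real.sqrt (‖(μ - 1) • Bpar - Bperp‖ ^ 2) :=
          (Real.sqrt_sq (norm_nonneg _)).symm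
      _ = Real.sqrt ((‖Bperp‖ / s) ^ 2) := by rw [hsq]
      _ = ‖Bperp‖ / s := Real.sqrt_sq (by positivity)
  have hX : ‖(μ - 1) • Bpar - Bperp‖ + c * μ * ‖Bpar‖ = c * ‖Bpar‖ + s * ‖Bperp‖ := by
    have hdiv : ‖Bperp‖ / s = c * ‖Bpar‖ + s * ‖Bperp‖ - c * μ * ‖Bpar‖ := by
      rw [div_eq_iff hs0.ne']
      linear_combination (-c) * h1μ - ‖Bperp‖ * hs2
    rw [hnorm1, hdiv]
    ring
  -- lower bound
  have lower : ∀ A : S, c * ‖Bpar‖ + s * ‖Bperp‖ ≤ min ‖(A : E)‖ ‖B‖ * c + ‖(A : E) - B‖ := by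
    intro A
    rw [hAB A]
    have hd : ‖Bpar‖ - ‖(A : E)‖ ≤ ‖(A : E) - Bpar‖ := by
      have h := norm_sub_norm_le Bpar (A : E)
      rwa [norm_sub_rev] at h
    rcases le_total ‖(A : E)‖ ‖B‖ with h | h
    · rw [min_eq_left h]
      have k' : s * ‖Bperp‖ + c * ‖(A : E) - Bpar‖ ≤
          Real.sqrt (‖(A : E) - Bpar‖ ^ 2 + ‖Bperp‖ ^ 2) := by
        have hpw : (-(‖(A : E) - Bpar‖)) ^ 2 = ‖(A : E) - Bpar‖ ^ 2 := by ring
        have k2 := key (-(‖(A : E) - Bpar‖))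
        rw [hpw] at k2
        linarith [k2]
      have hcd := mul_le_mul_of_nonneg_left hd hc0
      linarith [k', hcd]
    · rw [min_eq_right h]
      have h1 : s * ‖Bperp‖ ≤ Real.sqrt (‖(A : E) - Bpar‖ ^ 2 + ‖Bperp‖ ^ 2) := by
        calc s * ‖Bperp‖ ≤ 1 * ‖Bperp‖ := mul_le_mul_of_nonneg_right hs1 hq
          _ = Real.sqrt (‖Bperp‖ ^ 2) := by rw [one_mul, Real.sqrt_sq hq]
          _ ≤ _ := Real.sqrt_le_sqrt (by nlinarith [sq_nonneg ‖(A : E) - Bpar‖])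
      have h2 : c * ‖Bpar‖ ≤ ‖B‖ * c := by nlinarith [mul_le_mul_of_nonneg_left hpB hc0]
      linarith
  -- bounded below
  have hbdd : BddBelow (Set.range fun A : S => min ‖(A : E)‖ ‖B‖ * c + ‖(A : E) - B‖) := by
    refine ⟨0, ?_⟩
    rintro x ⟨A, rfl⟩
    have h0 : 0 ≤ min ‖(A : E)‖ ‖B‖ := le_min (norm_nonneg _) (norm_nonneg _)
    exact add_nonneg (mul_nonneg h0 hc0) (norm_nonneg _)
  -- the minimizer
  set Astar : S := ⟨μ • Bpar, hsmul μ⟩ with hAstar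
  have hnormμ : ‖(Astar : E)‖ = μ * ‖Bpar‖ := by
    show ‖μ • Bpar‖ = μ * ‖Bpar‖
    rw [norm_smul, Real.norm_eq_abs, abs_of_nonneg hμ0]
  have hμpB : μ * ‖Bpar‖ ≤ ‖B‖ := by nlinarith
  have hA' : (Astar : E) - B = (μ - 1) • Bpar - Bperp := by
    show μ • Bpar - B = (μ - 1) • Bpar - Bperp
    rw [hBsum, sub_smul, one_smul]; abel
  have hfstar : min ‖(Astar : E)‖ ‖B‖ * c + ‖(Astar : E) - B‖
      = ‖(μ - 1) • Bpar - Bperp‖ + c * μ * ‖Bpar‖ := by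
    rw [hA', hnormμ, min_eq_left hμpB]; ring
  apply le_antisymm
  · apply le_min
    · calc (⨅ A : S, (min ‖(A : E)‖ ‖B‖ * c + ‖(A : E) - B‖))
          ≤ min ‖(Astar : E)‖ ‖B‖ * c + ‖(Astar : E) - B‖ := ciInf_le hbdd Astar
        _ = _ := hfstar
    · calc (⨅ A : S, (min ‖(A : E)‖ ‖B‖ * c + ‖(A : E) - B‖))
          ≤ min ‖((0 : S) : E)‖ ‖B‖ * c + ‖((0 : S) : E) - B‖ := ciInf_le hbdd 0
        _ = ‖B‖ := by simp
  · apply le_ciInf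
    intro A
    calc min (‖(μ - 1) • Bpar - Bperp‖ + c * μ * ‖Bpar‖) ‖B‖
        ≤ ‖(μ - 1) • Bpar - Bperp‖ + c * μ * ‖Bpar‖ := min_le_left _ _
      _ = c * ‖Bpar‖ + s * ‖Bperp‖ := hX
      _ ≤ _ := lower A
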